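/- Let G be a bi-nut digraph on a finite vertex type V with at least 2 vertices and let w ∈ V be any vertex. Then G − w is a non-singular digraph, i.e. the adjacency matrix of the induced digraph on V ∖ {w} has trivial kernel (equivalently, nonzero determinant). -/

import Mathlib

open Matrix Finset
open scoped Classical

variable {V : Type*} [Fintype V] [DecidableEq V]
variable {W : Type*} [Fintype W] [DecidableEq W]

/-- Adjacency matrix of a digraph `G` on `V`. -/
noncomputable def adjMat (G : V → V → Prop) : Matrix V V ℝ :=
  Matrix.of fun u v => if G u v then (1 : ℝ) else 0

/-- The kernel of a digraph. -/
def KerD (G : V → V → Prop) : Set (V → ℝ) := {x | (adjMat G).mulVec x = 0}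

/-- The cokernel of a digraph. -/
def CoKerD (G : V → V → Prop) : Set (V → ℝ) := {x | (adjMat G)ᵀ.mulVec x = 0}

/-- A vector is full if it has no zero entries. -/
def Full (x : V → ℝ) : Prop := ∀ v, x v ≠ 0

/-- Dextro-nut digraph: the kernel is one-dimensional, spanned by a full vector. -/
def IsDextroNut (G : V → V → Prop) : Prop :=
  ∃ x ∈ KerD G, Full x ∧ ∀ y ∈ KerD G, ∃ c : ℝ, y = c • x

/-- Laevo-nut digraph: the cokernel is one-dimensional, spanned by a full vector. -/
def IsLaevoNut (G : V → V → Prop) : Prop :=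
  ∃ x ∈ CoKerD G, Full x ∧ ∀ y ∈ CoKerD G, ∃ c : ℝ, y = c • x

/-- Bi-nut digraph: both dextro-nut and laevo-nut. -/
def IsBiNut (G : V → V → Prop) : Prop := IsDextroNut G ∧ IsLaevoNut G

/-- Ambi-nut digraph: one full vector spans both kernel and cokernel. -/
def IsAmbiNut (G : V → V → Prop) : Prop :=
  ∃ x : V → ℝ, Full x ∧ x ∈ KerD G ∧ x ∈ CoKerD G ∧
    (∀ y ∈ KerD G, ∃ c : ℝ, y = c • x) ∧ (∀ y ∈ CoKerD G, ∃ c : ℝ, y = c • x)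

/-- Inter-nut digraph: the intersection of kernel and cokernel is one-dimensional,
spanned by a full vector. -/
def IsInterNut (G : V → V → Prop) : Prop :=
  ∃ x : V → ℝ, Full x ∧ x ∈ KerD G ∩ CoKerD G ∧
    ∀ y ∈ KerD G ∩ CoKerD G, ∃ c : ℝ, y = c • x

/-- Nullity of a digraph: dimension of the kernel of its adjacency matrix. -/
noncomputable def nullityD (G : V → V → Prop) : ℕ :=
  Module.finrank ℝ (LinearMap.ker (adjMat G).mulVecLin)

/-- The digraph obtained by deleting vertex `v`. -/
def delV (G : V → V → Prop) (v : V) : {u : V // u ≠ v} → {u : V // u ≠ v} → Prop :=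
  fun a b => G a.1 b.1

theorem stmt7 (G : V → V → Prop) (hbi : IsBiNut G) (hcard : 2 ≤ Fintype.card V)
    (w : V) :
    ∀ x : {u : V // u ≠ w} → ℝ, (adjMat (delV G w)).mulVec x = 0 → x = 0 := by
  obtain ⟨⟨k, hk, hkfull, hkspan⟩, ⟨c, hc, hcfull, -⟩⟩ := hbi
  intro x hx
  set xt : V → ℝ := fun v => if h : v = w then 0 else x ⟨v, h⟩ with hxt
  have hxtw : xt w = 0 := by simp [hxt]
  -- each coordinate u ≠ w of A * xt vanishes
  have key : ∀ u : V, u ≠ w → (adjMat G).mulVec xt u = 0 := by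
    intro u hu
    have h1 : (adjMat G).mulVec xt u
        = ∑ v ∈ Finset.univ \ {w}, adjMat G u v * xt v + adjMat G u w * xt w := by
      rw [Matrix.mulVec, dotProduct,
        Finset.sum_eq_sum_sdiff_singleton_add (Finset.mem_univ w)]
    have h2 : ∑ v ∈ Finset.univ \ {w}, adjMat G u v * xt v
        = ∑ v : {v : V // v ≠ w}, adjMat (delV G w) ⟨u, hu⟩ v * x v := by
      rw [Finset.sum_subtype (Finset.univ \ {w}) (p := fun v => v ≠ w) (by simp)]
      refine Finset.sum_congr rfl fun v _ => ?_
      by_cases hG : G u v.1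
      · have hG' : delV G w ⟨u, hu⟩ v := hG
        simp [hxt, v.2, adjMat, hG, hG']
      · have hG' : ¬ delV G w ⟨u, hu⟩ v := hG
        simp [hxt, v.2, adjMat, hG, hG']
    have h3 : (adjMat (delV G w)).mulVec x ⟨u, hu⟩ = 0 := by rw [hx]; rfl
    rw [h1, h2, hxtw]
    simpa [Matrix.mulVec, dotProduct] using h3
  -- coordinate w also vanishes, via the full cokernel vector c
  have hdot : c ⬝ᵥ (adjMat G).mulVec xt = 0 := by
    rw [Matrix.dotProduct_mulVec, ← Matrix.mulVec_transpose, hc]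
    simp
  have hdot2 : c ⬝ᵥ (adjMat G).mulVec xt = c w * (adjMat G).mulVec xt w := by
    rw [dotProduct]
    refine Finset.sum_eq_single w (fun u _ hu => by rw [key u hu, mul_zero]) (by simp)
  have hw0 : (adjMat G).mulVec xt w = 0 := by
    have := hdot2 ▸ hdot
    exact (mul_eq_zero.mp this).resolve_left (hcfull w)
  have hker : xt ∈ KerD G := by
    funext u
    by_cases hu : u = w
    · subst hu; exact hw0
    · exact key u hu
  obtain ⟨d, hd⟩ := hkspan xt hker
  have hd0 : d = 0 := by
    have := congrFun hd w
    rw [hxtw] at this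
    have : d * k w = 0 := by simpa using this.symm
    exact (mul_eq_zero.mp this).resolve_right (hkfull w)
  funext v
  have := congrFun hd v.1
  simp [hxt, v.2, hd0] at this
  simpa using this
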